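/- KKT sufficiency for the bundle entropy subproblem: let G ∈ ℝ^{k×n}, h ∈ ℝ^k, and suppose λ* ∈ ℝ^k satisfies λ* ≥ 0 and 1ᵀλ* = 1. Define y* ∈ (0,1)^n by y*_j = 1/(1 + exp((Gᵀλ*)_j)) and t* = max_{1 ≤ i ≤ k} (Gy* + h)_i. If complementary slackness holds, i.e., λ*_i · ((Gy* + h)_i − t*) = 0 for every i, then (y*, t*) is a global minimizer of t − H(y) over all y ∈ [0,1]^n and t ∈ ℝ satisfying Gy + h ≤ t·1. -/

import Mathlib

lemma kl_nonneg (y p : ℝ) (hy0 : 0 ≤ y) (hy1 : y ≤ 1) (hp0 : 0 < p) (hp1 : p < 1) :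
    0 ≤ y * (Real.log y - Real.log p) + (1 - y) * (Real.log (1 - y) - Real.log (1 - p)) := by
  rcases eq_or_lt_of_le hy0 with h0 | h0
  · have : Real.log (1 - p) ≤ 0 := Real.log_nonpos (by linarith) (by linarith)
    simp [← h0]
    linarith
  rcases eq_or_lt_of_le hy1 with h1 | h1
  · have : Real.log p ≤ 0 := Real.log_nonpos hp0.le hp1.le
    simp [h1]
    linarith
  · have l1 : Real.log (p / y) ≤ p / y - 1 := Real.log_le_sub_one_of_pos (by positivity)
    have l2 : Real.log ((1 - p) / (1 - y)) ≤ (1 - p) / (1 - y) - 1 :=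
      Real.log_le_sub_one_of_pos (by apply div_pos <;> linarith)
    rw [Real.log_div hp0.ne' h0.ne'] at l1
    rw [Real.log_div (by linarith) (by linarith)] at l2
    have m1 : y * (Real.log p - Real.log y) ≤ p - y := by
      have hmul := mul_le_mul_of_nonneg_left l1 h0.le
      have e : y * (p / y - 1) = p - y := by field_simp
      linarith [hmul]
    have m2 : (1 - y) * (Real.log (1 - p) - Real.log (1 - y)) ≤ (1 - p) - (1 - y) := by
      have h1y : (0:ℝ) < 1 - y := by linarith
      have hmul := mul_le_mul_of_nonneg_left l2 h1y.le
      have e : (1 - y) * ((1 - p) / (1 - y) - 1) = (1 - p) - (1 - y) := by field_simp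
      linarith [hmul]
    nlinarith [m1, m2]

lemma key_ineq (c y : ℝ) (hy0 : 0 ≤ y) (hy1 : y ≤ 1) :
    (1/(1+Real.exp c)) * Real.log (1/(1+Real.exp c)) +
      (1 - 1/(1+Real.exp c)) * Real.log (1 - 1/(1+Real.exp c)) + c * (1/(1+Real.exp c)) ≤
    y * Real.log y + (1 - y) * Real.log (1 - y) + c * y := by
  set p := 1/(1+Real.exp c) with hp
  have hec : (0:ℝ) < Real.exp c := Real.exp_pos c
  have hden : (1:ℝ) < 1 + Real.exp c := by linarith
  have hp0 : 0 < p := by rw [hp]; positivity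
  have hp1 : p < 1 := by rw [hp, div_lt_one (by linarith)]; linarith
  have h1p : 1 - p = Real.exp c / (1 + Real.exp c) := by
    rw [hp]; field_simp; ring
  have hc : c = Real.log (1 - p) - Real.log p := by
    rw [h1p, hp, Real.log_div hec.ne' (by linarith), Real.log_div one_ne_zero (by linarith),
      Real.log_one, Real.log_exp]
    ring
  have hKL := kl_nonneg y p hy0 hy1 hp0 hp1
  rw [hc]
  nlinarith [hKL]


/-- The negative binary entropy `-H(y) = ∑ᵢ (yᵢ log yᵢ + (1 - yᵢ) log (1 - yᵢ))`.
Note that `Real.log 0 = 0` in Mathlib, so this automatically uses the convention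
`0 · log 0 = 0`. -/
noncomputable def negEnt {n : ℕ} (y : Fin n → ℝ) : ℝ :=
  ∑ i, (y i * Real.log (y i) + (1 - y i) * Real.log (1 - y i))

/-- KKT sufficiency for the bundle entropy subproblem: if `λ* ≥ 0` with
`1ᵀλ* = 1`, `y*ⱼ = 1/(1 + exp ((Gᵀλ*)ⱼ))`, `t* = maxᵢ (Gy* + h)ᵢ`, and complementary
slackness `λ*ᵢ · ((Gy* + h)ᵢ - t*) = 0` holds for every `i`, then `(y*, t*)` is a global
minimizer of `t - H(y) = t + negEnt y` over all `y ∈ [0,1]ⁿ`, `t ∈ ℝ` with `Gy + h ≤ t·1`. -/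
theorem bundle_entropy_kkt_sufficient (k n : ℕ) (hk : 0 < k)
    (G : Matrix (Fin k) (Fin n) ℝ) (h : Fin k → ℝ)
    (lamstar : Fin k → ℝ) (hlam : ∀ i, 0 ≤ lamstar i) (hsum : ∑ i, lamstar i = 1)
    (ystar : Fin n → ℝ)
    (hystar : ∀ j, ystar j = 1 / (1 + Real.exp (G.transpose.mulVec lamstar j)))
    (tstar : ℝ)
    (htstar : tstar = Finset.univ.sup' ⟨⟨0, hk⟩, Finset.mem_univ _⟩
      fun i => G.mulVec ystar i + h i)
    (hcs : ∀ i, lamstar i * (G.mulVec ystar i + h i - tstar) = 0) :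
    ystar ∈ Set.Icc (0 : Fin n → ℝ) 1 ∧
    (∀ i, G.mulVec ystar i + h i ≤ tstar) ∧
    (∀ y ∈ Set.Icc (0 : Fin n → ℝ) 1, ∀ t : ℝ, (∀ i, G.mulVec y i + h i ≤ t) →
      tstar + negEnt ystar ≤ t + negEnt y) := by
  set c : Fin n → ℝ := G.transpose.mulVec lamstar with hcdef
  have hy0 : ∀ j, 0 ≤ ystar j := by
    intro j; rw [hystar j]; positivity
  have hy1 : ∀ j, ystar j ≤ 1 := by
    intro j; rw [hystar j]
    rw [div_le_one (by positivity)]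
    linarith [Real.exp_pos (c j)]
  -- swap lemma
  have swap : ∀ z : Fin n → ℝ, ∑ i, lamstar i * G.mulVec z i = ∑ j, c j * z j := by
    intro z
    simp only [hcdef, Matrix.mulVec, dotProduct, Matrix.transpose_apply,
      Finset.mul_sum, Finset.sum_mul]
    rw [Finset.sum_comm]
    congr 1; ext j; congr 1; ext i; ring
  have hsumyst : ∑ i, lamstar i * (G.mulVec ystar i + h i) = tstar := by
    have : ∀ i, lamstar i * (G.mulVec ystar i + h i) = lamstar i * tstar := by
      intro i; have := hcs i; nlinarith [hcs i]
    rw [Finset.sum_congr rfl fun i _ => this i, ← Finset.sum_mul, hsum, one_mul]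
  refine ⟨Set.mem_Icc.mpr ⟨fun j => hy0 j, fun j => hy1 j⟩, ?_, ?_⟩
  · intro i
    rw [htstar]
    exact Finset.le_sup' (fun i => G.mulVec ystar i + h i) (Finset.mem_univ i)
  · intro y hy t ht
    obtain ⟨hyl, hyu⟩ := Set.mem_Icc.mp hy
    have hty : ∑ i, lamstar i * (G.mulVec y i + h i) ≤ t := by
      calc ∑ i, lamstar i * (G.mulVec y i + h i) ≤ ∑ i, lamstar i * t := by
            apply Finset.sum_le_sum
            intro i _
            exact mul_le_mul_of_nonneg_left (ht i) (hlam i)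
        _ = t := by rw [← Finset.sum_mul, hsum, one_mul]
    have hphi : ∑ j, (ystar j * Real.log (ystar j) + (1 - ystar j) * Real.log (1 - ystar j)
        + c j * ystar j) ≤
        ∑ j, (y j * Real.log (y j) + (1 - y j) * Real.log (1 - y j) + c j * y j) := by
      apply Finset.sum_le_sum
      intro j _
      rw [hystar j]
      exact key_ineq (c j) (y j) (hyl j) (hyu j)
    have expand : ∀ z : Fin n → ℝ,
        ∑ j, (z j * Real.log (z j) + (1 - z j) * Real.log (1 - z j) + c j * z j) =
        negEnt z + ∑ i, lamstar i * G.mulVec z i := by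
      intro z
      rw [swap z, negEnt, ← Finset.sum_add_distrib]
    have key : tstar + negEnt ystar ≤
        (∑ i, lamstar i * (G.mulVec y i + h i)) + negEnt y := by
      have e1 : tstar + negEnt ystar =
          ∑ j, (ystar j * Real.log (ystar j) + (1 - ystar j) * Real.log (1 - ystar j)
            + c j * ystar j) + ∑ i, lamstar i * h i := by
        rw [expand ystar, ← hsumyst]
        simp only [mul_add, Finset.sum_add_distrib]
        ring
      have e2 : (∑ i, lamstar i * (G.mulVec y i + h i)) + negEnt y =
          ∑ j, (y j * Real.log (y j) + (1 - y j) * Real.log (1 - y j) + c j * y j)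
            + ∑ i, lamstar i * h i := by
        rw [expand y]
        simp only [mul_add, Finset.sum_add_distrib]
        ring
      rw [e1, e2]
      linarith [hphi]
    linarith [key, hty]
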